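/- (Fully corrective gradient bound.) Let $f : \mathbb{R}^p \to \mathbb{R}$ be differentiable with RSC parameter $\alpha$ at sparsity level $2s + s^*$. Let $\theta^* = \arg\min_{\|\theta\|_0 \le s^*} f(\theta)$ with support $S^*$, let $S_t \subseteq [p]$ with $|S_t| \le s$, and let $\theta^t = \arg\min_{\mathrm{supp}(\theta) \subseteq S_t} f(\theta)$ with $g^t = \nabla f(\theta^t)$. Then $2\alpha\left(f(\theta^t) - f(\theta^*)\right) \le \|g^t_{S_t \cup S^*}\|_2^2 - \alpha^2 \|\theta^t_{S_t \setminus S^*}\|_2^2$. -/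

import Mathlib

/-- Fully corrective gradient bound (Lemma 4 of the paper, γ = 1/α case):
with RSC parameter `α` at level `2s + s*`, `θ*` the `s*`-sparse minimizer with
support `S*`, and `θt` the minimizer of `f` over vectors supported in `S_t`
(`|S_t| ≤ s`), we have
`2α(f(θt) - f(θ*)) ≤ ‖g_{S_t ∪ S*}‖² - α²‖θt_{S_t \ S*}‖²`. -/
theorem fully_corrective_gradient_bound (p s sstar : ℕ) (α : ℝ) (hα : 0 < α)
    (f : (Fin p → ℝ) → ℝ) (grad : (Fin p → ℝ) → Fin p → ℝ)
    (hdiff : Differentiable ℝ f)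
    (hgrad : ∀ x v, fderiv ℝ f x v = ∑ i, grad x i * v i)
    (hRSC : ∀ θ1 θ2 : Fin p → ℝ,
      (Finset.univ.filter fun i => θ1 i ≠ 0).card +
          (Finset.univ.filter fun i => θ2 i ≠ 0).card ≤ 2 * s + sstar →
      f θ1 - f θ2 ≥ (∑ i, (θ1 i - θ2 i) * grad θ2 i) +
        α / 2 * ∑ i, (θ1 i - θ2 i) ^ 2)
    (θstar : Fin p → ℝ)
    (hθstar_sp : (Finset.univ.filter fun i => θstar i ≠ 0).card ≤ sstar)
    (hθstar_min : ∀ θ : Fin p → ℝ,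
      (Finset.univ.filter fun i => θ i ≠ 0).card ≤ sstar → f θstar ≤ f θ)
    (St : Finset (Fin p)) (hSt : St.card ≤ s)
    (θt : Fin p → ℝ) (hθt_supp : ∀ i, θt i ≠ 0 → i ∈ St)
    (hθt_min : ∀ θ : Fin p → ℝ, (∀ i, θ i ≠ 0 → i ∈ St) → f θt ≤ f θ) :
    2 * α * (f θt - f θstar) ≤
      (∑ i ∈ St ∪ (Finset.univ.filter fun i => θstar i ≠ 0),
        (grad θt i) ^ 2) -
      α ^ 2 * ∑ i ∈ St \ (Finset.univ.filter fun i => θstar i ≠ 0),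
        (θt i) ^ 2 := by
  classical
  set T : Finset (Fin p) := Finset.univ.filter fun i => θstar i ≠ 0 with hT
  have hTmem : ∀ i, i ∈ T ↔ θstar i ≠ 0 := by
    intro i; simp [hT]
  -- Step A: gradient vanishes on St
  have hg0 : ∀ i ∈ St, grad θt i = 0 := by
    intro i hi
    set v : Fin p → ℝ := Pi.single i 1 with hv
    have hline : HasDerivAt (fun t : ℝ => θt + t • v) v 0 := by
      simpa using ((hasDerivAt_id (0:ℝ)).smul_const v).const_add θt
    have hf : HasFDerivAt f (fderiv ℝ f θt) (θt + (0:ℝ) • v) := by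
      simpa using (hdiff θt).hasFDerivAt
    have hcomp : HasDerivAt (fun t : ℝ => f (θt + t • v)) (fderiv ℝ f θt v) 0 := by
      have := hf.comp_hasDerivAt (x := (0:ℝ)) hline
      exact this
    have hmin : IsLocalMin (fun t : ℝ => f (θt + t • v)) 0 := by
      apply Filter.Eventually.of_forall
      intro t
      simp only
      have h0 : θt + (0:ℝ) • v = θt := by simp
      rw [h0]
      apply hθt_min
      intro j hj
      by_cases hji : j = i
      · exact hji ▸ hi
      · apply hθt_supp
        simpa [hv, Pi.single_apply, hji] using hj
    have hd0 : fderiv ℝ f θt v = 0 := by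
      have := hmin.deriv_eq_zero
      rwa [hcomp.deriv] at this
    have : (∑ j, grad θt j * v j) = grad θt i := by
      rw [Finset.sum_eq_single i]
      · simp [hv]
      · intro j _ hji; simp [hv, Pi.single_apply, hji]
      · simp
    rw [← this, ← hgrad]
    exact hd0
  -- Step B: RSC
  have hcard : (Finset.univ.filter fun i => θstar i ≠ 0).card +
      (Finset.univ.filter fun i => θt i ≠ 0).card ≤ 2 * s + sstar := by
    have hT2 : (Finset.univ.filter fun i => θstar i ≠ 0).card ≤ sstar := hθstar_sp
    have h1 : (Finset.univ.filter fun i => θt i ≠ 0) ⊆ St := by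
      intro i hi; exact hθt_supp i (by simpa using hi)
    have := Finset.card_le_card h1
    omega
  have hB := hRSC θstar θt hcard
  -- Step C: linear term
  have hC : (∑ i, (θstar i - θt i) * grad θt i) = ∑ i ∈ T \ St, θstar i * grad θt i := by
    rw [← Finset.sum_subset (Finset.subset_univ (T \ St))]
    · apply Finset.sum_congr rfl
      intro i hi
      have hiSt : i ∉ St := (Finset.mem_sdiff.mp hi).2
      have : θt i = 0 := by
        by_contra h; exact hiSt (hθt_supp i h)
      rw [this]; ring
    · intro i _ hi
      by_cases hiSt : i ∈ St
      · rw [hg0 i hiSt]; ring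
      · have h1 : θt i = 0 := by by_contra h; exact hiSt (hθt_supp i h)
        have h2 : θstar i = 0 := by
          by_contra h
          exact hi (Finset.mem_sdiff.mpr ⟨(hTmem i).mpr h, hiSt⟩)
        rw [h1, h2]; ring
  -- Step D: quadratic term lower bound
  have hD : (∑ i ∈ T \ St, (θstar i)^2) + (∑ i ∈ St \ T, (θt i)^2)
      ≤ ∑ i, (θstar i - θt i) ^ 2 := by
    have hdisj : Disjoint (T \ St) (St \ T) := by
      apply Finset.disjoint_left.mpr
      intro i hi1 hi2
      exact (Finset.mem_sdiff.mp hi2).2 (Finset.mem_sdiff.mp hi1).1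
    have heq : (∑ i ∈ T \ St, (θstar i)^2) + (∑ i ∈ St \ T, (θt i)^2)
        = ∑ i ∈ (T \ St) ∪ (St \ T), (θstar i - θt i)^2 := by
      rw [Finset.sum_union hdisj]
      congr 1
      · apply Finset.sum_congr rfl
        intro i hi
        have : θt i = 0 := by
          by_contra h; exact (Finset.mem_sdiff.mp hi).2 (hθt_supp i h)
        rw [this]; ring
      · apply Finset.sum_congr rfl
        intro i hi
        have : θstar i = 0 := by
          by_contra h
          exact (Finset.mem_sdiff.mp hi).2 ((hTmem i).mpr h)
        rw [this]; ring
    rw [heq]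
    apply Finset.sum_le_sum_of_subset_of_nonneg (Finset.subset_univ _)
    intro i _ _; positivity
  -- Step E: Young's inequality summed
  have hE : -(2 * α) * (∑ i ∈ T \ St, θstar i * grad θt i)
      ≤ α ^ 2 * (∑ i ∈ T \ St, (θstar i)^2) + ∑ i ∈ T \ St, (grad θt i)^2 := by
    rw [Finset.mul_sum, Finset.mul_sum, ← Finset.sum_add_distrib]
    apply Finset.sum_le_sum
    intro i _
    nlinarith [sq_nonneg (α * θstar i + grad θt i)]
  -- Step F: gradient sum monotone
  have hF : (∑ i ∈ T \ St, (grad θt i)^2) ≤ ∑ i ∈ St ∪ T, (grad θt i)^2 := by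
    apply Finset.sum_le_sum_of_subset_of_nonneg
    · intro i hi
      exact Finset.mem_union_right _ (Finset.mem_sdiff.mp hi).1
    · intro i _ _; positivity
  -- Combine
  set A := ∑ i ∈ T \ St, θstar i * grad θt i
  set B := ∑ i ∈ T \ St, (θstar i)^2
  set C := ∑ i ∈ St \ T, (θt i)^2
  set G := ∑ i ∈ St ∪ T, (grad θt i)^2
  rw [hC] at hB
  have key : f θstar - f θt ≥ A + α / 2 * (B + C) := by
    have h2 : α / 2 * (B + C) ≤ α / 2 * ∑ i, (θstar i - θt i) ^ 2 := by
      apply mul_le_mul_of_nonneg_left hD (by linarith)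
    linarith
  nlinarith [key, hE, hF]
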